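/- Let S be a family of finite sets over a ground set of size n, pairwise comparable under inclusion, each of size at least n−k, where k ≤ n−1. If n−k ≥ 2, then the minimum set of the chain is shared: every element (process index) appearing in the minimum set 'witnesses' the same minimum set. Consequently, in any subfamily obtained by selecting the sets of n−1 of the n processes (each process contributing at most one set, with at most one process's set missing), the minimum set of the whole family appears in the subfamily provided the family satisfies Immediacy and Self-inclusion. -/
import Mathlib


/-- the minimum view of a k-IS family with n-k ≥ 2 is shared:
every process whose index appears in `min_view` and returns, returns exactly
`min_view`; consequently any subfamily of views contributed by n-1 of the n
processes contains `min_view`. -/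
theorem kIS_min_view_shared
    (n k : ℕ) (Val : Type) [DecidableEq Val]
    (hnk : 2 ≤ n - k)
    (views : Fin n → Option (Finset (Fin n × Val)))
    (minView : Finset (Fin n × Val))
    (hret : ∃ i₀, views i₀ = some minView)
    (hmin : ∀ i w, views i = some w → minView ⊆ w)
    (hself : ∀ i vi, views i = some vi → ∃ v, (i, v) ∈ vi)
    (hcont : ∀ i j vi vj, views i = some vi → views j = some vj →
      vi ⊆ vj ∨ vj ⊆ vi)
    (himm : ∀ i j vi vj, views i = some vi → views j = some vj →
      (∃ v, (i, v) ∈ vj) → vi ⊆ vj)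
    (hsize : ∀ i w, views i = some w → n - k ≤ w.card)
    (huniq : ∀ i v v', (i, v) ∈ minView → (i, v') ∈ minView → v = v') :
    (∀ i, (∃ v, (i, v) ∈ minView) → ∀ w, views i = some w → w = minView) ∧
    (∀ T : Finset (Fin n), n - 1 ≤ T.card → (∀ i ∈ T, (views i).isSome) →
      ∃ i ∈ T, views i = some minView) := by
  obtain ⟨i₀, hi₀⟩ := hret
  have part1 : ∀ i, (∃ v, (i, v) ∈ minView) → ∀ w, views i = some w → w = minView := by
    intro i hv w hw
    exact Finset.Subset.antisymm (himm i i₀ w minView hw hi₀ hv) (hmin i w hw)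
  refine ⟨part1, ?_⟩
  intro T hT hsome
  -- the set of indices appearing in minView has card ≥ 2
  set S : Finset (Fin n) := minView.image Prod.fst with hS
  have hScard : 2 ≤ S.card := by
    have hinj : Set.InjOn Prod.fst (minView : Set (Fin n × Val)) := by
      rintro ⟨a, v⟩ ha ⟨b, v'⟩ hb h
      simp only at h
      subst h
      exact congrArg _ (huniq a v v' ha hb)
    have := Finset.card_image_of_injOn hinj
    rw [hS, this]
    exact le_trans hnk (hsize i₀ minView hi₀)
  -- T misses at most one index
  have hexists : ∃ i ∈ S, i ∈ T := by
    by_contra h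
    push_neg at h
    have hsub : S ⊆ Tᶜ := fun i hi => Finset.mem_compl.mpr (h i hi)
    have h1 : S.card ≤ Tᶜ.card := Finset.card_le_card hsub
    have h2 : Tᶜ.card = n - T.card := by
      rw [Finset.card_compl, Fintype.card_fin]
    have h3 : n - T.card ≤ n - (n - 1) := Nat.sub_le_sub_left hT n
    have h4 : n - (n - 1) ≤ 1 := by omega
    omega
  obtain ⟨i, hiS, hiT⟩ := hexists
  obtain ⟨⟨a, v⟩, hav, rfl⟩ := Finset.mem_image.mp hiS
  obtain ⟨w, hw⟩ := Option.isSome_iff_exists.mp (hsome _ hiT)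
  exact ⟨_, hiT, by rw [hw, part1 _ ⟨v, hav⟩ w hw]⟩
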